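/- Let M be a strictly totally ordered monoid with at least two elements (a monoid with a total order such that g < g' implies gh < g'h and hg < hg' for all g, g', h ∈ M) and let R be an M-central Armendariz ring. Then R is a right p.p.-ring if and only if the monoid ring R[M] is a right p.p.-ring. -/

import Mathlib

open MonoidAlgebra

section Aux
variable {M R : Type*} [Monoid M] [Ring R]

/-- From the M-central Armendariz hypothesis, `e r (1-e) = 0` for idempotent `e`. -/
lemma aux_er1e [Nontrivial M]
    (hCA : ∀ α β : MonoidAlgebra R M, α * β = 0 →
      ∀ g ∈ α.coeff.support, ∀ h ∈ β.coeff.support, α.coeff g * β.coeff h ∈ Set.center R)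
    {e : R} (he : IsIdempotentElem e) (r : R) : e * r * (1 - e) = 0 := by
  classical
  obtain ⟨u, hu⟩ := exists_ne (1 : M)
  set z := e * r * (1 - e) with hzdef
  by_contra hz
  have hez : e * z = z := by
    rw [hzdef, ← mul_assoc, ← mul_assoc, he.eq]
  have h1e : (1 - e) * e = 0 := by
    rw [sub_mul, one_mul, he.eq, sub_self]
  have hze : z * e = 0 := by
    rw [hzdef, mul_assoc, h1e, mul_zero]
  have hzz : z * z = 0 := by
    nth_rewrite 2 [← hez]
    rw [← mul_assoc, hze, zero_mul]
  have hene : e ≠ 0 := by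
    intro h; apply hz; rw [hzdef, h, zero_mul, zero_mul]
  set α : MonoidAlgebra R M := single 1 e + single u z with hα
  set β : MonoidAlgebra R M := single 1 (1 - e) + single u (-z) with hβ
  have hmul : α * β = 0 := by
    rw [hα, hβ, add_mul, mul_add, mul_add, single_mul_single, single_mul_single,
      single_mul_single, single_mul_single]
    have h1 : e * (1 - e) = 0 := by rw [mul_sub, mul_one, he.eq, sub_self]
    have h2 : z * (1 - e) = z := by rw [mul_sub, mul_one, hze, sub_zero]
    have h3 : e * -z = -z := by rw [mul_neg, hez]
    have h4 : z * -z = 0 := by rw [mul_neg, hzz, neg_zero]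
    rw [h1, h2, h3, h4]
    simp only [one_mul, mul_one, MonoidAlgebra.single_zero, zero_add, add_zero,
      ← MonoidAlgebra.single_add, neg_add_cancel]
  have hα1 : α.coeff 1 = e := by
    rw [hα, MonoidAlgebra.coeff_add, Finsupp.add_apply, MonoidAlgebra.coeff_single, Finsupp.single_eq_same, MonoidAlgebra.coeff_single, Finsupp.single_eq_of_ne' hu, add_zero]
  have hβu : β.coeff u = -z := by
    rw [hβ, MonoidAlgebra.coeff_add, Finsupp.add_apply, MonoidAlgebra.coeff_single, Finsupp.single_eq_of_ne' hu.symm, MonoidAlgebra.coeff_single, Finsupp.single_eq_same, zero_add]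
  have hmem1 : (1 : M) ∈ α.coeff.support := by
    rw [Finsupp.mem_support_iff, hα1]; exact hene
  have hmemu : u ∈ β.coeff.support := by
    rw [Finsupp.mem_support_iff, hβu]; simpa using hz
  have hc := hCA α β hmul 1 hmem1 u hmemu
  rw [hα1, hβu, mul_neg, hez] at hc
  have hc2 := (Semigroup.mem_center_iff.mp hc) e
  rw [mul_neg, hez, neg_mul, hze, neg_zero, neg_eq_zero] at hc2
  exact hz hc2

lemma aux_abelian [Nontrivial M]
    (hCA : ∀ α β : MonoidAlgebra R M, α * β = 0 →
      ∀ g ∈ α.coeff.support, ∀ h ∈ β.coeff.support, α.coeff g * β.coeff h ∈ Set.center R)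
    {e : R} (he : IsIdempotentElem e) (r : R) : e * r = r * e := by
  have h1 : e * r * (1 - e) = 0 := aux_er1e hCA he r
  have h2 : (1 - e) * r * e = 0 := by
    have h := aux_er1e hCA he.one_sub r
    rwa [sub_sub_cancel] at h
  rw [mul_sub, mul_one, sub_eq_zero] at h1
  rw [sub_mul, sub_mul, one_mul, sub_eq_zero] at h2
  rw [h1]; exact h2.symm

end Aux


section Aux2
variable {M R : Type*} [Monoid M] [LinearOrder M] [Ring R]

lemma aux_flip {R : Type*} [Ring R] (hred : ∀ a : R, a * a = 0 → a = 0)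
    {a b : R} (h : a * b = 0) : b * a = 0 := by
  apply hred
  rw [mul_assoc, ← mul_assoc a b a, h, zero_mul, mul_zero]

lemma aux_cancel_left (hstrict₂ : ∀ g g' h : M, g < g' → h * g < h * g')
    {g h h' : M} (heq : g * h' = g * h) : h' = h := by
  rcases lt_trichotomy h' h with hl | hl | hl
  · exact absurd heq (ne_of_lt (hstrict₂ h' h g hl))
  · exact hl
  · exact absurd heq.symm (ne_of_lt (hstrict₂ h h' g hl))

lemma aux_armendariz
    (hstrict₁ : ∀ g g' h : M, g < g' → g * h < g' * h)
    (hstrict₂ : ∀ g g' h : M, g < g' → h * g < h * g')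
    (hred : ∀ a : R, a * a = 0 → a = 0)
    (α β : MonoidAlgebra R M) (hmul : α * β = 0) :
    ∀ g ∈ α.coeff.support, ∀ h ∈ β.coeff.support, α.coeff g * β.coeff h = 0 := by
  classical
  set T : Finset (M × M) := α.coeff.support ×ˢ β.coeff.support with hT
  set rel : M × M → M × M → Prop :=
    fun q p => q.1 * q.2 < p.1 * p.2 ∨ (q.1 * q.2 = p.1 * p.2 ∧ q.1 < p.1) with hreldef
  set rk : M × M → ℕ := fun p => (T.filter (fun q => rel q p)).card with hrk
  have htrans : ∀ {a b c : M × M}, rel a b → rel b c → rel a c := by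
    rintro a b c (h1 | ⟨h1, h1'⟩) (h2 | ⟨h2, h2'⟩)
    · exact Or.inl (h1.trans h2)
    · exact Or.inl (h2 ▸ h1)
    · exact Or.inl (h1 ▸ h2)
    · exact Or.inr ⟨h1.trans h2, h1'.trans h2'⟩
  have hirr : ∀ a : M × M, ¬ rel a a := by
    rintro a (h | ⟨h, h'⟩)
    · exact lt_irrefl _ h
    · exact lt_irrefl _ h'
  have hrklt : ∀ q ∈ T, ∀ p : M × M, rel q p → rk q < rk p := by
    intro q hq p hqp
    apply Finset.card_lt_card
    constructor
    · intro x hx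
      rw [Finset.mem_filter] at hx ⊢
      exact ⟨hx.1, htrans hx.2 hqp⟩
    · intro hsub
      have : q ∈ T.filter (fun x => rel x q) := hsub (Finset.mem_filter.mpr ⟨hq, hqp⟩)
      exact hirr q (Finset.mem_filter.mp this).2
  suffices H : ∀ n : ℕ, ∀ g ∈ α.coeff.support, ∀ h ∈ β.coeff.support, rk (g, h) ≤ n → α.coeff g * β.coeff h = 0 by
    intro g hg h hh
    exact H (rk (g, h)) g hg h hh le_rfl
  intro n
  induction n using Nat.strong_induction_on with
  | _ n IH =>
    intro g hg h hh hn
    set z := α.coeff g * β.coeff h with hz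
    -- the coefficient of g*h in α*β is zero
    have hcoef : (∑ g' ∈ α.coeff.support, ∑ h' ∈ β.coeff.support,
        (if g' * h' = g * h then α.coeff g' * β.coeff h' else 0)) = 0 := by
      have h0 : (α * β).coeff (g * h) = 0 := by rw [hmul]; rfl
      rw [MonoidAlgebra.mul_apply] at h0
      simpa [Finsupp.sum] using h0
    have hkey : z * z = 0 := by
      have hmulz := congrArg (· * z) hcoef
      simp only [Finset.sum_mul, zero_mul] at hmulz
      rw [← hmulz]
      have hterm : ∀ g' ∈ α.coeff.support, ∀ h' ∈ β.coeff.support,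
          (if g' * h' = g * h then α.coeff g' * β.coeff h' else 0) * z
            = if g' = g ∧ h' = h then z * z else 0 := by
        intro g' hg' h' hh'
        by_cases heq : g' * h' = g * h
        · rw [if_pos heq]
          rcases lt_trichotomy g' g with hlt | hgg | hlt
          · -- smaller pair with the same product: use IH
            have hrel : rel (g', h') (g, h) := Or.inr ⟨heq, hlt⟩
            have hrkl : rk (g', h') < n :=
              lt_of_lt_of_le (hrklt (g', h') (Finset.mem_product.mpr ⟨hg', hh'⟩) (g, h) hrel) hn
            have h0 : α.coeff g' * β.coeff h' = 0 := IH _ hrkl g' hg' h' hh' le_rfl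
            rw [h0, zero_mul]
            rw [if_neg]
            rintro ⟨rfl, -⟩; exact lt_irrefl _ hlt
          · -- same g: then h' = h
            subst hgg
            have : h' = h := aux_cancel_left hstrict₂ heq
            subst this
            rw [if_pos ⟨rfl, rfl⟩]
          · -- g < g' : then g * h' < g * h, use IH and flip
            have hlt2 : g * h' < g * h := by
              calc g * h' < g' * h' := hstrict₁ g g' h' hlt
              _ = g * h := heq
            have hrel : rel (g, h') (g, h) := Or.inl hlt2
            have hrkl : rk (g, h') < n :=
              lt_of_lt_of_le (hrklt (g, h') (Finset.mem_product.mpr ⟨hg, hh'⟩) (g, h) hrel) hn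
            have h0 : α.coeff g * β.coeff h' = 0 := IH _ hrkl g hg h' hh' le_rfl
            have h0' : β.coeff h' * α.coeff g = 0 := aux_flip hred h0
            rw [if_neg (by rintro ⟨rfl, -⟩; exact lt_irrefl _ hlt)]
            rw [hz, ← mul_assoc, mul_assoc (α.coeff g') (β.coeff h') (α.coeff g), h0', mul_zero, zero_mul]
        · rw [if_neg heq, zero_mul, if_neg]
          rintro ⟨rfl, rfl⟩; exact heq rfl
      rw [Finset.sum_congr rfl fun g' hg' => Finset.sum_congr rfl fun h' hh' => hterm g' hg' h' hh']
      -- now compute the double sum of the indicator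
      have hinner : ∀ g' ∈ α.coeff.support,
          (∑ h' ∈ β.coeff.support, if g' = g ∧ h' = h then z * z else 0)
            = if g' = g then z * z else 0 := by
        intro g' _
        by_cases hgg : g' = g
        · subst hgg
          simp [Finset.sum_ite_eq', hh]
        · simp [hgg]
      rw [Finset.sum_congr rfl hinner, Finset.sum_ite_eq' α.coeff.support g (fun _ => z * z),
        if_pos hg]
    exact hred z hkey

end Aux2


section Aux3
variable {M R : Type*} [Monoid M] [Ring R]

/-- abelian + right p.p. implies reduced -/
lemma aux_reduced (habel : ∀ e : R, IsIdempotentElem e → ∀ r : R, e * r = r * e)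
    (hpp : ∀ a : R, ∃ e : R, IsIdempotentElem e ∧ ∀ x : R, a * x = 0 ↔ ∃ r : R, x = e * r)
    (a : R) (ha : a * a = 0) : a = 0 := by
  obtain ⟨e, he, hann⟩ := hpp a
  obtain ⟨r, hr⟩ := (hann a).mp ha
  have hae : a * e = 0 := (hann e).mpr ⟨1, (mul_one e).symm⟩
  have hea : e * a = a := by rw [hr, ← mul_assoc, he.eq]
  rw [← hea, habel e he a, hae]

/-- product of the annihilating idempotents over a finite set -/
lemma aux_prod_idem {ι : Type*} (habel : ∀ e : R, IsIdempotentElem e → ∀ r : R, e * r = r * e)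
    (s : Finset ι) (a : ι → R)
    (hpp : ∀ g ∈ s, ∃ e : R, IsIdempotentElem e ∧ ∀ x : R, a g * x = 0 ↔ ∃ r : R, x = e * r) :
    ∃ e : R, IsIdempotentElem e ∧ (∀ g ∈ s, a g * e = 0) ∧
      (∀ x : R, (∀ g ∈ s, a g * x = 0) → e * x = x) := by
  classical
  induction s using Finset.cons_induction with
  | empty => exact ⟨1, by simp [IsIdempotentElem], by simp, fun x _ => one_mul x⟩
  | cons g s hg IH =>
    obtain ⟨e, he, h1, h2⟩ := IH (fun g' hg' => hpp g' (Finset.mem_cons_of_mem hg'))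
    obtain ⟨f, hf, hann⟩ := hpp g (Finset.mem_cons_self g s)
    have hcomm : f * e = e * f := habel f hf e
    refine ⟨f * e, ?_, ?_, ?_⟩
    · show f * e * (f * e) = f * e
      rw [mul_assoc, ← mul_assoc e f e, ← hcomm, mul_assoc, he.eq, ← mul_assoc, hf.eq]
    · intro g' hg'
      rcases Finset.mem_cons.mp hg' with rfl | hg'
      · have : a g' * f = 0 := (hann f).mpr ⟨1, (mul_one f).symm⟩
        rw [← mul_assoc, this, zero_mul]
      · rw [hcomm, ← mul_assoc, h1 g' hg', zero_mul]
    · intro x hx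
      have hex : e * x = x := h2 x (fun g' hg' => hx g' (Finset.mem_cons_of_mem hg'))
      obtain ⟨r, hr⟩ := (hann x).mp (hx g (Finset.mem_cons_self g s))
      have hfx : f * x = x := by rw [hr, ← mul_assoc, hf.eq]
      rw [mul_assoc, hex, hfx]

/-- the augmentation ring hom -/
noncomputable def aug : MonoidAlgebra R M →+* R :=
  MonoidAlgebra.liftNCRingHom (RingHom.id R) (1 : M →* R) (fun _ _ => Commute.one_right _)

@[simp] lemma aug_single (g : M) (r : R) : (aug (single g r : MonoidAlgebra R M)) = r := by
  simp [aug, MonoidAlgebra.liftNCRingHom, MonoidAlgebra.liftNC_single]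

end Aux3

/-- Let `M` be a strictly totally ordered monoid with `|M| ≥ 2` and `R` an `M`-central
Armendariz ring. Then `R` is a right p.p.-ring iff `R[M]` is a right p.p.-ring. -/
theorem stmt_12 (M R : Type*) [Monoid M] [Nontrivial M] [LinearOrder M] [Ring R]
    (hstrict₁ : ∀ g g' h : M, g < g' → g * h < g' * h)
    (hstrict₂ : ∀ g g' h : M, g < g' → h * g < h * g')
    (hCA : ∀ α β : MonoidAlgebra R M, α * β = 0 →
      ∀ g ∈ α.coeff.support, ∀ h ∈ β.coeff.support, α.coeff g * β.coeff h ∈ Set.center R) :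
    (∀ a : R, ∃ e : R, IsIdempotentElem e ∧
        ∀ x : R, a * x = 0 ↔ ∃ r : R, x = e * r) ↔
      (∀ a : MonoidAlgebra R M, ∃ e : MonoidAlgebra R M, IsIdempotentElem e ∧
        ∀ x : MonoidAlgebra R M, a * x = 0 ↔ ∃ r : MonoidAlgebra R M, x = e * r) := by
  classical
  constructor
  · -- R right p.p. → R[M] right p.p.
    intro hpp α
    have habel : ∀ e : R, IsIdempotentElem e → ∀ r : R, e * r = r * e :=
      fun e he r => aux_abelian hCA he r
    have hred := aux_reduced habel hpp
    obtain ⟨e, he, h0, h1⟩ := aux_prod_idem habel α.coeff.support (fun g => α.coeff g) (fun g _ => hpp (α.coeff g))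
    refine ⟨MonoidAlgebra.single 1 e, ?_, ?_⟩
    · show MonoidAlgebra.single (1 : M) e * MonoidAlgebra.single 1 e = MonoidAlgebra.single 1 e
      rw [MonoidAlgebra.single_mul_single, one_mul, he.eq]
    · intro x
      constructor
      · intro hx
        refine ⟨x, ?_⟩
        ext h
        rw [MonoidAlgebra.single_one_mul_apply]
        symm
        apply h1
        intro g hg
        by_cases hh : h ∈ x.coeff.support
        · exact aux_armendariz hstrict₁ hstrict₂ hred α x hx g hg h hh
        · rw [Finsupp.notMem_support_iff.mp hh, mul_zero]
      · rintro ⟨r, rfl⟩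
        rw [← mul_assoc]
        have hze : α * MonoidAlgebra.single (1 : M) e = 0 := by
          ext g
          rw [MonoidAlgebra.coeff_mul_single_one, MonoidAlgebra.coeff_zero, Finsupp.coe_zero, Pi.zero_apply]
          by_cases hg : g ∈ α.coeff.support
          · exact h0 g hg
          · rw [Finsupp.notMem_support_iff.mp hg, zero_mul]
        rw [hze, zero_mul]
  · -- R[M] right p.p. → R right p.p.
    intro hpp a
    obtain ⟨E, hE, hann⟩ := hpp (MonoidAlgebra.single 1 a)
    refine ⟨aug E, ?_, ?_⟩
    · show aug E * aug E = aug E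
      rw [← map_mul, hE.eq]
    · intro x
      constructor
      · intro hx
        obtain ⟨r, hr⟩ := (hann (MonoidAlgebra.single 1 x)).mp
          (by rw [MonoidAlgebra.single_mul_single, one_mul, hx, MonoidAlgebra.single_zero])
        refine ⟨aug r, ?_⟩
        have := congrArg aug hr
        rwa [aug_single, map_mul] at this
      · rintro ⟨r, rfl⟩
        have h0 : MonoidAlgebra.single (1 : M) a * E = 0 := (hann E).mpr ⟨1, (mul_one E).symm⟩
        have h1 := congrArg aug h0
        rw [map_mul, aug_single, map_zero] at h1
        rw [← mul_assoc, h1, zero_mul]
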